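/- Let f : (0,∞) → [0,1] be non-increasing and suppose its Laplace transform satisfies Lf(λs)/Lf(λ) ≤ c·s^{−1/2} for all λ > 0 and s > 1, where c > 0. Then there exists a constant c' > 0 depending only on c such that f(t) ≥ c'·(1/t)·Lf(1/t) for all t > 0. -/

import Mathlib

open MeasureTheory Set Real Filter Topology

lemma exp_integral_Ioi_zero {b : ℝ} (hb : 0 < b) :
    (∫ x in Ioi (0 : ℝ), Real.exp (-b * x)) = 1 / b := by
  have hderiv : ∀ x ∈ Ici (0 : ℝ),
      HasDerivAt (fun x => -Real.exp (-b * x) / b) (Real.exp (-b * x)) x := by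
    intro x _
    have := (((hasDerivAt_id x).const_mul (-b)).exp.neg).div_const b
    simpa [hb.ne', mul_comm, mul_div_assoc, neg_div, div_self] using this
  have htend : Tendsto (fun x => -Real.exp (-b * x) / b) atTop (𝓝 (-0 / b)) := by
    refine Tendsto.div_const (Tendsto.neg ?_) _
    exact tendsto_exp_atBot.comp (tendsto_id.const_mul_atTop_of_neg (neg_neg_iff_pos.2 hb))
  have := integral_Ioi_of_hasDerivAt_of_tendsto' hderiv (exp_neg_integrableOn_Ioi 0 hb)
    (by simpa using htend)
  rw [this]
  norm_num [hb.ne', neg_div, one_div]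

theorem stmt7 (c : ℝ) (hc : 0 < c) :
    ∃ c' : ℝ, 0 < c' ∧
      ∀ f : ℝ → ℝ, (∀ t : ℝ, 0 < t → f t ∈ Icc (0 : ℝ) 1) → AntitoneOn f (Ioi 0) →
        (∀ lam s : ℝ, 0 < lam → 1 < s →
          (∫ t in Ioi (0 : ℝ), Real.exp (-(lam * s) * t) * f t) ≤
            c * s ^ (-(1 / 2) : ℝ) * ∫ t in Ioi (0 : ℝ), Real.exp (-lam * t) * f t) →
        ∀ t : ℝ, 0 < t →
          c' * (1 / t) * (∫ u in Ioi (0 : ℝ), Real.exp (-(1 / t) * u) * f u) ≤ f t := by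
  set m : ℝ := (2 * c * Real.exp 1) ^ 2 + 1 with hm_def
  have h2ce : 0 < 2 * c * Real.exp 1 := by positivity
  have hm1 : 1 < m := by nlinarith
  have hm0 : 0 < m := lt_trans one_pos hm1
  -- key numeric fact : exp 1 * (c * m ^ (-(1/2))) ≤ 1/2
  have hrpow : m ^ (-(1 / 2) : ℝ) = (Real.sqrt m)⁻¹ := by
    rw [Real.rpow_neg hm0.le, Real.sqrt_eq_rpow]
  have hsqrt : 2 * c * Real.exp 1 ≤ Real.sqrt m := by
    have : 2 * c * Real.exp 1 = Real.sqrt ((2 * c * Real.exp 1) ^ 2) := by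
      rw [Real.sqrt_sq h2ce.le]
    rw [this]
    exact Real.sqrt_le_sqrt (by nlinarith)
  have hnum : Real.exp 1 * (c * m ^ (-(1 / 2) : ℝ)) ≤ 1 / 2 := by
    have hs0 : 0 < Real.sqrt m := Real.sqrt_pos.2 hm0
    have key : Real.exp 1 * (c * (Real.sqrt m)⁻¹) =
        (2 * c * Real.exp 1) / Real.sqrt m / 2 := by field_simp
    rw [hrpow, key]
    have hd1 : (2 * c * Real.exp 1) / Real.sqrt m ≤ 1 := (div_le_one hs0).2 hsqrt
    linarith
  refine ⟨1 / (2 * m), by positivity, ?_⟩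
  intro f hf01 hanti hL t ht
  -- basic facts about f
  have hfmeas : AEMeasurable f (volume.restrict (Ioi (0:ℝ))) :=
    aemeasurable_restrict_of_antitoneOn measurableSet_Ioi hanti
  -- integrability of the Laplace integrand for any lam > 0, on any subset of Ioi 0
  have hint : ∀ lam : ℝ, 0 < lam →
      IntegrableOn (fun u => Real.exp (-lam * u) * f u) (Ioi (0:ℝ)) := by
    intro lam hlam
    refine Integrable.mono (exp_neg_integrableOn_Ioi 0 hlam)
      ((Real.measurable_exp.comp (measurable_const.mul measurable_id)).aestronglyMeasurable.mul
        hfmeas.aestronglyMeasurable) ?_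
    filter_upwards [ae_restrict_mem measurableSet_Ioi] with u hu
    have h01 := hf01 u hu
    rw [Real.norm_eq_abs, Real.norm_eq_abs, abs_mul, abs_of_pos (Real.exp_pos _),
      abs_of_nonneg h01.1]
    nlinarith [Real.exp_pos (-lam * u), h01.2]
  -- nonnegativity of the Laplace integral
  have hIpos : ∀ lam : ℝ, 0 ≤ ∫ u in Ioi (0:ℝ), Real.exp (-lam * u) * f u := by
    intro lam
    refine setIntegral_nonneg measurableSet_Ioi fun u hu => ?_
    exact mul_nonneg (Real.exp_pos _).le (hf01 u hu).1
  -- monotonicity of the Laplace integral in lam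
  have hImono : ∀ l1 l2 : ℝ, 0 < l1 → l1 ≤ l2 →
      (∫ u in Ioi (0:ℝ), Real.exp (-l2 * u) * f u) ≤
        ∫ u in Ioi (0:ℝ), Real.exp (-l1 * u) * f u := by
    intro l1 l2 hl1 hl12
    refine setIntegral_mono_on (hint l2 (lt_of_lt_of_le hl1 hl12)) (hint l1 hl1)
      measurableSet_Ioi fun u hu => ?_
    have h01 := hf01 u hu
    exact mul_le_mul_of_nonneg_right
      (Real.exp_le_exp.2 (by nlinarith [mem_Ioi.1 hu])) h01.1
  -- main estimate: for every t' > 0, f (t'/m) ≥ (1/(2 t')) * I(1/t')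
  have hmain : ∀ t' : ℝ, 0 < t' →
      (1 / 2) * (∫ u in Ioi (0:ℝ), Real.exp (-(1 / t') * u) * f u) ≤ f (t' / m) * t' := by
    intro t' ht'
    set lam : ℝ := 1 / t' with hlam_def
    have hlam : 0 < lam := by positivity
    set a : ℝ := t' / m with ha_def
    have ha : 0 < a := by positivity
    have hsplit : (∫ u in Ioi (0:ℝ), Real.exp (-lam * u) * f u) =
        (∫ u in Ioc (0:ℝ) a, Real.exp (-lam * u) * f u) +
          ∫ u in Ioi a, Real.exp (-lam * u) * f u := by
      rw [← Ioc_union_Ioi_eq_Ioi ha.le,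
        setIntegral_union Ioc_disjoint_Ioi_same measurableSet_Ioi
          ((hint lam hlam).mono_set (by rw [← Ioc_union_Ioi_eq_Ioi ha.le]; exact subset_union_left))
          ((hint lam hlam).mono_set (by rw [← Ioc_union_Ioi_eq_Ioi ha.le]; exact subset_union_right))]
    -- part 1 : the near-zero piece
    have hpart1 : (∫ u in Ioc (0:ℝ) a, Real.exp (-lam * u) * f u) ≤
        (1 / 2) * ∫ u in Ioi (0:ℝ), Real.exp (-lam * u) * f u := by
      have hIocIoi : Ioc (0:ℝ) a ⊆ Ioi 0 := Ioc_subset_Ioi_self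
      have step1 : (∫ u in Ioc (0:ℝ) a, Real.exp (-lam * u) * f u) ≤
          ∫ u in Ioc (0:ℝ) a, Real.exp 1 * (Real.exp (-(lam * m) * u) * f u) := by
        refine setIntegral_mono_on
          ((hint lam hlam).mono_set hIocIoi)
          ((((hint (lam * m) (by positivity)).mono_set hIocIoi)).const_mul _)
          measurableSet_Ioc fun u hu => ?_
        have h01 := hf01 u (hIocIoi hu)
        rw [← mul_assoc, ← Real.exp_add]
        refine mul_le_mul_of_nonneg_right (Real.exp_le_exp.2 ?_) h01.1
        have hua : u ≤ a := hu.2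
        have : lam * m * u ≤ 1 := by
          have : lam * m * u ≤ lam * m * a := by
            have : 0 < lam * m := by positivity
            nlinarith
          calc lam * m * u ≤ lam * m * a := this
            _ = 1 := by rw [ha_def, hlam_def]; field_simp
        nlinarith [hu.1, hlam]
      have step2 : (∫ u in Ioc (0:ℝ) a, Real.exp 1 * (Real.exp (-(lam * m) * u) * f u)) ≤
          Real.exp 1 * ∫ u in Ioi (0:ℝ), Real.exp (-(lam * m) * u) * f u := by
        rw [integral_const_mul]
        refine mul_le_mul_of_nonneg_left ?_ (Real.exp_pos 1).le
        refine setIntegral_mono_set (hint (lam * m) (by positivity)) ?_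
          (HasSubset.Subset.eventuallyLE hIocIoi)
        filter_upwards [ae_restrict_mem measurableSet_Ioi] with u hu
        exact mul_nonneg (Real.exp_pos _).le (hf01 u hu).1
      have step3 : (∫ u in Ioi (0:ℝ), Real.exp (-(lam * m) * u) * f u) ≤
          c * m ^ (-(1 / 2) : ℝ) * ∫ u in Ioi (0:ℝ), Real.exp (-lam * u) * f u :=
        hL lam m hlam hm1
      have hI := hIpos lam
      calc (∫ u in Ioc (0:ℝ) a, Real.exp (-lam * u) * f u)
          ≤ Real.exp 1 * ∫ u in Ioi (0:ℝ), Real.exp (-(lam * m) * u) * f u :=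
            le_trans step1 step2
        _ ≤ Real.exp 1 * (c * m ^ (-(1 / 2) : ℝ) * ∫ u in Ioi (0:ℝ), Real.exp (-lam * u) * f u) :=
            mul_le_mul_of_nonneg_left step3 (Real.exp_pos 1).le
        _ ≤ (1 / 2) * ∫ u in Ioi (0:ℝ), Real.exp (-lam * u) * f u := by nlinarith
    -- part 2 : the tail piece
    have hpart2 : (∫ u in Ioi a, Real.exp (-lam * u) * f u) ≤ f a * (1 / lam) := by
      have hfa0 : 0 ≤ f a := (hf01 a ha).1
      have step1 : (∫ u in Ioi a, Real.exp (-lam * u) * f u) ≤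
          ∫ u in Ioi a, f a * Real.exp (-lam * u) := by
        refine setIntegral_mono_on
          ((hint lam hlam).mono_set (Ioi_subset_Ioi ha.le))
          (((exp_neg_integrableOn_Ioi a hlam)).const_mul _)
          measurableSet_Ioi fun u hu => ?_
        have hu0 : (0:ℝ) < u := lt_trans ha (mem_Ioi.1 hu)
        have : f u ≤ f a := hanti (mem_Ioi.2 ha) (mem_Ioi.2 hu0) (mem_Ioi.1 hu).le
        nlinarith [Real.exp_pos (-lam * u)]
      have step2 : (∫ u in Ioi a, f a * Real.exp (-lam * u)) ≤
          f a * ∫ u in Ioi (0:ℝ), Real.exp (-lam * u) := by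
        rw [integral_const_mul]
        refine mul_le_mul_of_nonneg_left ?_ hfa0
        refine setIntegral_mono_set (exp_neg_integrableOn_Ioi 0 hlam) ?_
          (HasSubset.Subset.eventuallyLE (Ioi_subset_Ioi ha.le))
        exact Eventually.of_forall fun u => (Real.exp_pos _).le
      calc (∫ u in Ioi a, Real.exp (-lam * u) * f u)
          ≤ f a * ∫ u in Ioi (0:ℝ), Real.exp (-lam * u) := le_trans step1 step2
        _ = f a * (1 / lam) := by rw [exp_integral_Ioi_zero hlam]
    -- combine
    have hlamt : 1 / lam = t' := one_div_one_div t'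
    rw [hlamt] at hpart2
    linarith
  -- apply the main estimate at t' = m * t
  have hmt : 0 < m * t := by positivity
  have h1 := hmain (m * t) hmt
  have ha_eq : m * t / m = t := by field_simp
  rw [ha_eq] at h1
  have h2 : (∫ u in Ioi (0:ℝ), Real.exp (-(1 / t) * u) * f u) ≤
      ∫ u in Ioi (0:ℝ), Real.exp (-(1 / (m * t)) * u) * f u := by
    refine hImono (1 / (m * t)) (1 / t) (by positivity) ?_
    rw [div_le_div_iff₀ hmt ht]
    nlinarith
  have h3 : (∫ u in Ioi (0:ℝ), Real.exp (-(1 / t) * u) * f u) ≤ f t * (m * t) * 2 := by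
    linarith
  calc (1 / (2 * m)) * (1 / t) * (∫ u in Ioi (0:ℝ), Real.exp (-(1 / t) * u) * f u)
      ≤ (1 / (2 * m)) * (1 / t) * (f t * (m * t) * 2) := by
        apply mul_le_mul_of_nonneg_left h3 (by positivity)
    _ = f t := by field_simp
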